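/- (Mateev) For every n ∈ ℕ and every q ∈ [0,1], the Shannon entropy of the binomial distribution B(n,q) satisfies H_n(q) ≤ H_n(1/2); i.e., the entropy of B(n,q) is maximized at q = 1/2. -/

import Mathlib

open Finset

/-- `H_n(q)`: Shannon entropy (base 2) of the binomial distribution `B(n,q)`,
with the convention `0 · log₂ 0 = 0` (note `Real.logb 2 0 = 0`). -/
noncomputable def binomEnt (n : ℕ) (q : ℝ) : ℝ :=
  -∑ k ∈ Finset.range (n + 1),
    ((n.choose k : ℝ) * q ^ k * (1 - q) ^ (n - k)) *
      Real.logb 2 ((n.choose k : ℝ) * q ^ k * (1 - q) ^ (n - k))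

namespace Mateev

/-- The binomial pmf term. -/
noncomputable def p (n k : ℕ) (q : ℝ) : ℝ :=
  (n.choose k : ℝ) * q ^ k * (1 - q) ^ (n - k)

/-- Its derivative in `q`. -/
noncomputable def pd (n k : ℕ) (q : ℝ) : ℝ :=
  (n.choose k : ℝ) * ((k : ℝ) * q ^ (k - 1)) * (1 - q) ^ (n - k)
    - (n.choose k : ℝ) * q ^ k * (((n - k : ℕ) : ℝ) * (1 - q) ^ (n - k - 1))

lemma hasDerivAt_p (n k : ℕ) (q : ℝ) : HasDerivAt (fun t => p n k t) (pd n k q) q := by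
  have h1 : HasDerivAt (fun t : ℝ => (n.choose k : ℝ) * t ^ k)
      ((n.choose k : ℝ) * ((k : ℝ) * q ^ (k - 1))) q :=
    (hasDerivAt_pow k q).const_mul _
  have hinner : HasDerivAt (fun t : ℝ => 1 - t) (-1) q := by
    simpa using (hasDerivAt_id q).const_sub (1 : ℝ)
  have h2 : HasDerivAt (fun t : ℝ => (1 - t) ^ (n - k))
      ((((n - k : ℕ) : ℝ) * (1 - q) ^ (n - k - 1)) * (-1)) q :=
    (hasDerivAt_pow (n - k) (1 - q)).comp q hinner
  have h := h1.mul h2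
  refine HasDerivAt.congr_deriv h ?_
  simp only [pd]; ring

lemma p_pos {n k : ℕ} (hk : k ≤ n) {q : ℝ} (h0 : 0 < q) (h1 : q < 1) : 0 < p n k q := by
  have hc : 0 < (n.choose k : ℝ) := by exact_mod_cast Nat.choose_pos hk
  have : (0:ℝ) < 1 - q := by linarith
  unfold p; positivity

lemma p_nonneg {n k : ℕ} {q : ℝ} (h0 : 0 ≤ q) (h1 : q ≤ 1) : 0 ≤ p n k q := by
  have : (0:ℝ) ≤ 1 - q := by linarith
  unfold p; positivity

/-- The key summation-by-parts identity:
`∑ pd n k q * x k = n * ∑ p (n-1) j q * (x (j+1) - x j)`. -/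
lemma key (n : ℕ) (q : ℝ) (x : ℕ → ℝ) :
    ∑ k ∈ range (n + 1), pd n k q * x k
      = n * ∑ j ∈ range n, p (n - 1) j q * (x (j + 1) - x j) := by
  cases n with
  | zero => simp [pd]
  | succ m =>
    have hsplit : ∑ k ∈ range (m + 2), pd (m + 1) k q * x k
        = (∑ k ∈ range (m + 2),
            ((m + 1).choose k : ℝ) * ((k : ℝ) * q ^ (k - 1)) * (1 - q) ^ (m + 1 - k) * x k)
          - ∑ k ∈ range (m + 2),
            ((m + 1).choose k : ℝ) * q ^ k * (((m + 1 - k : ℕ) : ℝ) * (1 - q) ^ (m + 1 - k - 1)) * x k := by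
      rw [← Finset.sum_sub_distrib]
      exact Finset.sum_congr rfl fun k _ => by simp [pd]; ring
    have hS1 : ∑ k ∈ range (m + 2),
          ((m + 1).choose k : ℝ) * ((k : ℝ) * q ^ (k - 1)) * (1 - q) ^ (m + 1 - k) * x k
        = ∑ j ∈ range (m + 1), ((m : ℝ) + 1) * (p m j q * x (j + 1)) := by
      rw [Finset.sum_range_succ']
      simp only [Nat.cast_zero, zero_mul, mul_zero]
      rw [add_zero]
      apply Finset.sum_congr rfl
      intro j hj
      have hj' : j ≤ m := by simpa using Nat.lt_succ_iff.mp (Finset.mem_range.mp hj)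
      have hc : ((m + 1).choose (j + 1) : ℝ) * ((j : ℝ) + 1) = ((m : ℝ) + 1) * (m.choose j : ℝ) := by
        exact_mod_cast (Nat.add_one_mul_choose_eq m j).symm
      have he1 : m + 1 - (j + 1) = m - j := by omega
      have he2 : j + 1 - 1 = j := by omega
      rw [he1, he2]
      simp only [p]
      push_cast
      linear_combination (q ^ j * (1 - q) ^ (m - j) * x (j + 1)) * hc
    have hS2 : ∑ k ∈ range (m + 2),
          ((m + 1).choose k : ℝ) * q ^ k * (((m + 1 - k : ℕ) : ℝ) * (1 - q) ^ (m + 1 - k - 1)) * x k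
        = ∑ k ∈ range (m + 1), ((m : ℝ) + 1) * (p m k q * x k) := by
      rw [Finset.sum_range_succ]
      simp only [Nat.sub_self, Nat.cast_zero, zero_mul, mul_zero, add_zero]
      apply Finset.sum_congr rfl
      intro k hk
      have hk' : k ≤ m := by simpa using Nat.lt_succ_iff.mp (Finset.mem_range.mp hk)
      have hnat : (m + 1 - k) * (m + 1).choose k = (m + 1) * m.choose k := by
        have h1 := Nat.choose_succ_right_eq (m + 1) k
        have h2 := Nat.add_one_mul_choose_eq m k
        calc (m + 1 - k) * (m + 1).choose k = (m + 1).choose k * (m + 1 - k) := Nat.mul_comm _ _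
          _ = (m + 1).choose (k + 1) * (k + 1) := h1.symm
          _ = (m + 1) * m.choose k := h2.symm
      have hc : ((m + 1 - k : ℕ) : ℝ) * ((m + 1).choose k : ℝ)
          = ((m : ℝ) + 1) * (m.choose k : ℝ) := by exact_mod_cast hnat
      have he : m + 1 - k - 1 = m - k := by omega
      rw [he]
      simp only [p]
      linear_combination (q ^ k * (1 - q) ^ (m - k) * x k) * hc
    rw [hsplit, hS1, hS2, ← Finset.sum_sub_distrib]
    have hm : m + 1 - 1 = m := rfl
    rw [hm, Finset.mul_sum]
    apply Finset.sum_congr rfl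
    intro j _
    push_cast
    ring

lemma sum_p (n : ℕ) (q : ℝ) : ∑ k ∈ range (n + 1), p n k q = 1 := by
  have h := add_pow q (1 - q) n
  have h1 : q + (1 - q) = (1 : ℝ) := by ring
  rw [h1, one_pow] at h
  rw [show (1:ℝ) = ∑ k ∈ range (n+1), q ^ k * (1-q) ^ (n-k) * (n.choose k : ℝ) from h]
  apply Finset.sum_congr rfl
  intro k _
  simp only [p]; ring

lemma sum_inv_identity (m : ℕ) (t : ℝ) :
    t * ((m : ℝ) * ∑ j ∈ range m, p (m - 1) j t * (1 / ((j : ℝ) + 1)))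
      = 1 - (1 - t) ^ m := by
  cases m with
  | zero => simp
  | succ r =>
    have hterm : ∀ j ∈ range (r + 1),
        t * (((r : ℝ) + 1) * (p r j t * (1 / ((j : ℝ) + 1)))) = p (r + 1) (j + 1) t := by
      intro j hj
      have hj' : j ≤ r := by simpa using Nat.lt_succ_iff.mp (Finset.mem_range.mp hj)
      have hc : ((r + 1).choose (j + 1) : ℝ) * ((j : ℝ) + 1) = ((r : ℝ) + 1) * (r.choose j : ℝ) := by
        exact_mod_cast (Nat.add_one_mul_choose_eq r j).symm
      have he : r + 1 - (j + 1) = r - j := by omega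
      simp only [p, he]
      have hj1 : ((j : ℝ) + 1) ≠ 0 := by positivity
      field_simp
      linear_combination (-(t ^ (j + 1) * (1 - t) ^ (r - j))) * hc
    calc t * (((r + 1 : ℕ) : ℝ) * ∑ j ∈ range (r + 1), p (r + 1 - 1) j t * (1 / ((j : ℝ) + 1)))
        = ∑ j ∈ range (r + 1), t * (((r : ℝ) + 1) * (p r j t * (1 / ((j : ℝ) + 1)))) := by
          rw [Finset.mul_sum, Finset.mul_sum]
          apply Finset.sum_congr rfl
          intro j _
          push_cast
          ring
      _ = ∑ j ∈ range (r + 1), p (r + 1) (j + 1) t := Finset.sum_congr rfl hterm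
      _ = (∑ k ∈ range (r + 2), p (r + 1) k t) - p (r + 1) 0 t := by
          rw [Finset.sum_range_succ' (fun k => p (r + 1) k t) (r + 1)]; ring
      _ = 1 - (1 - t) ^ (r + 1) := by
          rw [sum_p]
          simp [p]

/-- Natural-log entropy of `B(n,q)`. -/
noncomputable def Eent (n : ℕ) (q : ℝ) : ℝ :=
  -∑ k ∈ range (n + 1), p n k q * Real.log (p n k q)

noncomputable def A (m : ℕ) (t : ℝ) : ℝ :=
  ∑ j ∈ range (m + 1), p m j t * Real.log ((j : ℝ) + 1)

noncomputable def F (m : ℕ) (t : ℝ) : ℝ := A m t - Real.log t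

noncomputable def Fd (m : ℕ) (t : ℝ) : ℝ :=
  (∑ j ∈ range (m + 1), pd m j t * Real.log ((j : ℝ) + 1)) - t⁻¹

lemma hasDerivAt_A (m : ℕ) (t : ℝ) :
    HasDerivAt (A m) (∑ j ∈ range (m + 1), pd m j t * Real.log ((j : ℝ) + 1)) t := by
  apply HasDerivAt.fun_sum
  intro j _
  exact (hasDerivAt_p m j t).mul_const _

lemma hasDerivAt_F (m : ℕ) {t : ℝ} (ht : t ≠ 0) : HasDerivAt (F m) (Fd m t) t :=
  (hasDerivAt_A m t).sub (Real.hasDerivAt_log ht)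

lemma Fd_nonpos (m : ℕ) {t : ℝ} (h0 : 0 < t) (h1 : t < 1) : Fd m t ≤ 0 := by
  have hkey := key m t (fun j => Real.log ((j : ℝ) + 1))
  have hstep : ∑ j ∈ range m, p (m - 1) j t * (Real.log ((j : ℝ) + 1 + 1) - Real.log ((j : ℝ) + 1))
      ≤ ∑ j ∈ range m, p (m - 1) j t * (1 / ((j : ℝ) + 1)) := by
    apply Finset.sum_le_sum
    intro j _
    apply mul_le_mul_of_nonneg_left _ (p_nonneg h0.le h1.le)
    have hpos1 : (0:ℝ) < (j : ℝ) + 1 := by positivity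
    have hpos2 : (0:ℝ) < (j : ℝ) + 1 + 1 := by positivity
    rw [← Real.log_div (ne_of_gt hpos2) (ne_of_gt hpos1)]
    have := Real.log_le_sub_one_of_pos (show (0:ℝ) < ((j:ℝ)+1+1)/((j:ℝ)+1) by positivity)
    calc Real.log (((j:ℝ)+1+1)/((j:ℝ)+1)) ≤ ((j:ℝ)+1+1)/((j:ℝ)+1) - 1 := this
      _ = 1 / ((j:ℝ)+1) := by field_simp; ring
  have hbound : (m : ℝ) * ∑ j ∈ range m, p (m - 1) j t * (1 / ((j : ℝ) + 1)) ≤ t⁻¹ := by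
    have hS : (m : ℝ) * ∑ j ∈ range m, p (m - 1) j t * (1 / ((j : ℝ) + 1))
        = (1 - (1 - t) ^ m) / t := by
      rw [eq_div_iff (ne_of_gt h0)]
      linear_combination sum_inv_identity m t
    have hnn : (0:ℝ) ≤ (1 - t) ^ m := pow_nonneg (by linarith) m
    rw [hS, inv_eq_one_div]
    gcongr <;> linarith
  have hfinal : (∑ j ∈ range (m + 1), pd m j t * Real.log ((j : ℝ) + 1)) ≤ t⁻¹ := by
    push_cast at hkey
    rw [hkey]
    calc (m : ℝ) * ∑ j ∈ range m, p (m - 1) j t * (Real.log ((j : ℝ) + 1 + 1) - Real.log ((j : ℝ) + 1))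
        ≤ (m : ℝ) * ∑ j ∈ range m, p (m - 1) j t * (1 / ((j : ℝ) + 1)) :=
          mul_le_mul_of_nonneg_left hstep (Nat.cast_nonneg m)
      _ ≤ t⁻¹ := hbound
  unfold Fd
  linarith

lemma F_ge {m : ℕ} {q : ℝ} (h0 : 0 < q) (hh : q ≤ 1 / 2) : F m (1 - q) ≤ F m q := by
  have hanti : AntitoneOn (F m) (Set.Icc q (1 - q)) := by
    apply antitoneOn_of_deriv_nonpos (convex_Icc q (1 - q))
    · intro t ht
      have ht0 : t ≠ 0 := by
        have := ht.1
        intro h; rw [h] at this; linarith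
      exact (hasDerivAt_F m ht0).continuousAt.continuousWithinAt
    · intro t ht
      rw [interior_Icc] at ht
      have ht0 : t ≠ 0 := by
        have := ht.1; intro h; rw [h] at this; linarith
      exact (hasDerivAt_F m ht0).differentiableAt.differentiableWithinAt
    · intro t ht
      rw [interior_Icc] at ht
      have ht0 : 0 < t := lt_trans h0 ht.1
      have ht1 : t < 1 := by
        have := ht.2; linarith
      rw [(hasDerivAt_F m (ne_of_gt ht0)).deriv]
      exact Fd_nonpos m ht0 ht1
  exact hanti (Set.mem_Icc.mpr ⟨le_refl q, by linarith⟩)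
    (Set.mem_Icc.mpr ⟨by linarith, le_refl _⟩) (by linarith)

noncomputable def Ed (n : ℕ) (q : ℝ) : ℝ :=
  -∑ k ∈ range (n + 1), pd n k q * (Real.log (p n k q) + 1)

lemma hasDerivAt_Eent (n : ℕ) {q : ℝ} (h0 : 0 < q) (h1 : q < 1) :
    HasDerivAt (Eent n) (Ed n q) q := by
  have hterm : ∀ k ∈ range (n + 1),
      HasDerivAt (fun t => p n k t * Real.log (p n k t))
        ((Real.log (p n k q) + 1) * pd n k q) q := by
    intro k hk
    have hk' : k ≤ n := Nat.lt_succ_iff.mp (Finset.mem_range.mp hk)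
    have hp : p n k q ≠ 0 := ne_of_gt (p_pos hk' h0 h1)
    exact (Real.hasDerivAt_mul_log hp).comp q (hasDerivAt_p n k q)
  have h := (HasDerivAt.fun_sum hterm).neg
  have heq : -∑ k ∈ range (n + 1), (Real.log (p n k q) + 1) * pd n k q = Ed n q := by
    unfold Ed
    congr 1
    exact Finset.sum_congr rfl fun k _ => mul_comm _ _
  rw [heq] at h
  exact h

lemma log_p {n j : ℕ} (hj : j ≤ n) {q : ℝ} (h0 : 0 < q) (h1 : q < 1) :
    Real.log (p n j q)
      = Real.log (n.choose j : ℝ) + (j : ℝ) * Real.log q + ((n - j : ℕ) : ℝ) * Real.log (1 - q) := by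
  have hc : (n.choose j : ℝ) ≠ 0 := by
    exact_mod_cast (Nat.choose_pos hj).ne'
  have hq : q ^ j ≠ 0 := pow_ne_zero _ (ne_of_gt h0)
  have h1q : ((1 : ℝ) - q) ^ (n - j) ≠ 0 := pow_ne_zero _ (by linarith)
  unfold p
  rw [Real.log_mul (by positivity) h1q, Real.log_mul hc hq, Real.log_pow, Real.log_pow]

lemma log_p_diff {n j : ℕ} (hj : j < n) {q : ℝ} (h0 : 0 < q) (h1 : q < 1) :
    Real.log (p n (j + 1) q) - Real.log (p n j q)
      = (Real.log ((n - j : ℕ) : ℝ) - Real.log ((j : ℝ) + 1)) + (Real.log q - Real.log (1 - q)) := by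
  have hj1 : j + 1 ≤ n := hj
  have e1 := log_p hj1 h0 h1
  have e2 := log_p (le_of_lt hj) h0 h1
  have hChoose : Real.log (n.choose (j + 1) : ℝ) + Real.log ((j : ℝ) + 1)
      = Real.log (n.choose j : ℝ) + Real.log ((n - j : ℕ) : ℝ) := by
    have hnat := Nat.choose_succ_right_eq n j
    have hcast : (n.choose (j + 1) : ℝ) * ((j : ℝ) + 1) = (n.choose j : ℝ) * ((n - j : ℕ) : ℝ) := by
      exact_mod_cast hnat
    have hC1 : (n.choose (j + 1) : ℝ) ≠ 0 := by
      exact_mod_cast (Nat.choose_pos hj1).ne'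
    have hC2 : (n.choose j : ℝ) ≠ 0 := by
      exact_mod_cast (Nat.choose_pos (le_of_lt hj)).ne'
    have hj1' : ((j : ℝ) + 1) ≠ 0 := by positivity
    have hnj : ((n - j : ℕ) : ℝ) ≠ 0 := by
      have : 0 < n - j := by omega
      exact_mod_cast this.ne'
    rw [← Real.log_mul hC1 hj1', ← Real.log_mul hC2 hnj, hcast]
  have hcast1 : ((n - (j + 1) : ℕ) : ℝ) = ((n - j : ℕ) : ℝ) - 1 := by
    have : n - (j + 1) + 1 = n - j := by omega
    push_cast [← this]
    ring
  rw [e1, e2, hcast1]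
  push_cast
  linarith [hChoose]

lemma p_reflect {m j : ℕ} (hj : j ≤ m) (q : ℝ) : p m (m - j) q = p m j (1 - q) := by
  unfold p
  rw [Nat.choose_symm hj]
  have h1 : m - (m - j) = j := by omega
  rw [h1]
  have h2 : (1 : ℝ) - (1 - q) = q := by ring
  rw [h2]
  ring

lemma Ed_eq (n : ℕ) {q : ℝ} (h0 : 0 < q) (h1 : q < 1) :
    Ed n q = (n : ℝ) * (F (n - 1) q - F (n - 1) (1 - q)) := by
  cases n with
  | zero => simp [Ed, pd, F, A, p]
  | succ m =>
    set n := m + 1 with hn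
    have hsum_pd : ∑ k ∈ range (n + 1), pd n k q = 0 := by
      have := key n q (fun _ => 1)
      simpa using this
    have hEd : Ed n q = -∑ k ∈ range (n + 1), pd n k q * Real.log (p n k q) := by
      unfold Ed
      rw [show ∑ k ∈ range (n + 1), pd n k q * (Real.log (p n k q) + 1)
          = (∑ k ∈ range (n + 1), pd n k q * Real.log (p n k q)) + ∑ k ∈ range (n + 1), pd n k q by
        rw [← Finset.sum_add_distrib]; exact Finset.sum_congr rfl fun k _ => by ring]
      rw [hsum_pd, add_zero]
    have hkey := key n q (fun k => Real.log (p n k q))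
    have hterm : ∀ j ∈ range n,
        p (n - 1) j q * (Real.log (p n (j + 1) q) - Real.log (p n j q))
          = p (n - 1) j q * (Real.log ((n - j : ℕ) : ℝ) - Real.log ((j : ℝ) + 1))
            + p (n - 1) j q * (Real.log q - Real.log (1 - q)) := by
      intro j hj
      rw [log_p_diff (Finset.mem_range.mp hj) h0 h1]
      ring
    have hsplit : ∑ j ∈ range n, p (n - 1) j q * (Real.log (p n (j + 1) q) - Real.log (p n j q))
        = (∑ j ∈ range n, p (n - 1) j q * Real.log ((n - j : ℕ) : ℝ))
          - A (n - 1) q + (Real.log q - Real.log (1 - q)) := by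
      rw [Finset.sum_congr rfl hterm, Finset.sum_add_distrib]
      have hA : ∑ j ∈ range n, p (n - 1) j q * Real.log ((j : ℝ) + 1) = A (n - 1) q := rfl
      have hone : ∑ j ∈ range n, p (n - 1) j q * (Real.log q - Real.log (1 - q))
          = Real.log q - Real.log (1 - q) := by
        rw [← Finset.sum_mul]
        rw [show (range n) = range ((n - 1) + 1) from rfl, sum_p, one_mul]
      rw [hone]
      congr 1
      rw [Finset.sum_congr rfl (fun j _ => mul_sub (p (n - 1) j q) _ _), Finset.sum_sub_distrib, hA]
    have hreflect : ∑ j ∈ range n, p (n - 1) j q * Real.log ((n - j : ℕ) : ℝ) = A (n - 1) (1 - q) := by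
      rw [← Finset.sum_range_reflect (fun j => p (n - 1) j q * Real.log ((n - j : ℕ) : ℝ)) n]
      unfold A
      apply Finset.sum_congr rfl
      intro j hj
      have hj' : j ≤ m := Nat.lt_succ_iff.mp (Finset.mem_range.mp hj)
      have h1' : n - 1 - j = m - j := by omega
      have h2' : n - (m - j) = j + 1 := by omega
      rw [h1', h2']
      rw [show p (n - 1) (m - j) q = p (n - 1) j (1 - q) from p_reflect hj' q]
      push_cast
      ring
    rw [hEd, hkey, hsplit, hreflect]
    unfold F
    push_cast
    ring

lemma Ed_nonneg (n : ℕ) {q : ℝ} (h0 : 0 < q) (hh : q ≤ 1 / 2) : 0 ≤ Ed n q := by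
  have h1 : q < 1 := by linarith
  rw [Ed_eq n h0 h1]
  have := F_ge (m := n - 1) h0 hh
  have hn : (0:ℝ) ≤ (n : ℝ) := Nat.cast_nonneg n
  nlinarith

lemma Eent_continuous (n : ℕ) : Continuous (Eent n) := by
  unfold Eent
  apply Continuous.neg
  apply continuous_finset_sum
  intro k _
  have hp : Continuous (fun q : ℝ => p n k q) := by
    unfold p
    continuity
  exact Real.continuous_mul_log.comp hp

lemma Eent_le_half (n : ℕ) {q : ℝ} (h0 : 0 ≤ q) (hh : q ≤ 1 / 2) :
    Eent n q ≤ Eent n (1 / 2) := by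
  have hmono : MonotoneOn (Eent n) (Set.Icc (0 : ℝ) (1 / 2)) := by
    apply monotoneOn_of_deriv_nonneg (convex_Icc _ _) (Eent_continuous n).continuousOn
    · intro t ht
      rw [interior_Icc] at ht
      exact (hasDerivAt_Eent n ht.1 (by linarith [ht.2])).differentiableAt.differentiableWithinAt
    · intro t ht
      rw [interior_Icc] at ht
      rw [(hasDerivAt_Eent n ht.1 (by linarith [ht.2])).deriv]
      exact Ed_nonneg n ht.1 (le_of_lt ht.2)
  exact hmono (Set.mem_Icc.mpr ⟨h0, hh⟩) (Set.mem_Icc.mpr ⟨by norm_num, le_refl _⟩) hh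

lemma Eent_symm (n : ℕ) (q : ℝ) : Eent n (1 - q) = Eent n q := by
  unfold Eent
  congr 1
  rw [← Finset.sum_range_reflect (fun k => p n k q * Real.log (p n k q)) (n + 1)]
  apply Finset.sum_congr rfl
  intro k hk
  have hk' : k ≤ n := Nat.lt_succ_iff.mp (Finset.mem_range.mp hk)
  have h1' : n + 1 - 1 - k = n - k := by omega
  simp only [h1']
  rw [← p_reflect hk' q]

end Mateev

theorem binomEnt_le_binomEnt_half (n : ℕ) (q : ℝ) (hq : q ∈ Set.Icc (0 : ℝ) 1) :
    binomEnt n q ≤ binomEnt n (1 / 2) := by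
  obtain ⟨h0, h1⟩ := hq
  have hEq : ∀ t : ℝ, binomEnt n t = Mateev.Eent n t / Real.log 2 := by
    intro t
    unfold binomEnt Mateev.Eent Mateev.p
    rw [neg_div]
    congr 1
    rw [Finset.sum_div]
    apply Finset.sum_congr rfl
    intro k _
    simp only [Real.logb]
    ring
  rw [hEq, hEq]
  have hlog2 : (0:ℝ) < Real.log 2 := Real.log_pos (by norm_num)
  have hmain : Mateev.Eent n q ≤ Mateev.Eent n (1 / 2) := by
    rcases le_total q (1 / 2) with h | h
    · exact Mateev.Eent_le_half n h0 h
    · rw [← Mateev.Eent_symm n q]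
      exact Mateev.Eent_le_half n (by linarith) (by linarith)
  exact div_le_div_of_nonneg_right hmain hlog2.le
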